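/- Let T be a tree and P_T its lattice of subtrees. For every element p ∈ P_T, the set of atoms below p spans the subtree corresponding to p, which is acyclic; consequently, for any coordinatization of P_T, the lcm lattice of the resulting monomial ideal is P_T and its minimal free resolution is supported on the simplicial complex T (i.e., T_{≤p} is acyclic for all p ∈ P_T). -/

import Mathlib

open scoped Classical

/-- Monomials in variables `V`, represented by exponent vectors.
Multiplication is `+`, divisibility is `≤`, gcd is `⊓`, lcm is `⊔`, and the
trivial monomial `1` is `0`. -/
abbrev Monomial (V : Type*) := V →₀ ℕ

/-- An element `x` is meet-irreducible if `x ≠ ⊤` and `x ≠ a ⊓ b` for all `a, b > x`. -/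
def MeetIrred {P : Type*} [Lattice P] [OrderTop P] (x : P) : Prop :=
  x ≠ ⊤ ∧ ∀ a b : P, x < a → x < b → x ≠ a ⊓ b

/-- A finite lattice is atomic if every element other than `⊥` is the join of
the atoms below it. -/
def IsFinAtomic (P : Type*) [Lattice P] [BoundedOrder P] : Prop :=
  ∀ p : P, p ≠ ⊥ → IsLUB {a : P | IsAtom a ∧ a ≤ p} p

/-- The monomial `x(a) = ∏_{p ∈ (⌈a⌉)ᶜ} m_p` attached to `a` by a labeling `m`. -/
noncomputable def coordGen {P V : Type*} [PartialOrder P] [Fintype P]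
    (m : P → Monomial V) (a : P) : Monomial V :=
  ∑ p ∈ Finset.univ.filter (fun p : P => ¬ a ≤ p), m p

/-- The lcm lattice of a finite family of monomials: all least common multiples
of subsets of the family (the empty lcm being `1`), ordered by divisibility. -/
abbrev LcmLat {ι V : Type*} [Fintype ι] (g : ι → Monomial V) : Type _ :=
  {l : Monomial V // ∃ s : Finset ι, l = s.sup g}

/-- Condition (C1): every meet-irreducible element has a nontrivial label. -/
def CondC1 {P V : Type*} [Lattice P] [BoundedOrder P] (m : P → Monomial V) : Prop :=
  ∀ p : P, MeetIrred p → m p ≠ 0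

/-- Condition (C2): labels with a common variable sit on comparable elements. -/
def CondC2 {P V : Type*} [PartialOrder P] (m : P → Monomial V) : Prop :=
  ∀ p q : P, m p ⊓ m q ≠ 0 → p ≤ q ∨ q ≤ p

/-- A labeling is a coordinatization if the lcm lattice of the ideal generated
by the monomials `x(a)`, for `a` ranging over the atoms, is isomorphic to `P`. -/
def IsCoordinatization {P V : Type*} [PartialOrder P] [OrderBot P] [Fintype P]
    (m : P → Monomial V) : Prop :=
  Nonempty (P ≃o LcmLat (fun a : {a : P // IsAtom a} => coordGen m a.val))

section Trees

variable {V : Type*} [Fintype V] (G : SimpleGraph V)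

/-- The poset `P_T` of subtrees of `T`: finite sets of vertices whose induced
subgraph is (pre)connected, ordered by inclusion.  This includes the empty set
and all single vertices. -/
abbrev SubtreePoset (G : SimpleGraph V) : Type _ :=
  {s : Finset V // (G.induce (↑s : Set V)).Preconnected}

noncomputable instance : Fintype (SubtreePoset G) := Fintype.ofFinite _

/-- The single-vertex subtree `{v}`, an atom of `P_T`. -/
def vertexSubtree (v : V) : SubtreePoset G :=
  ⟨{v}, by
    rintro ⟨a, ha⟩ ⟨b, hb⟩
    simp only [Finset.coe_singleton, Set.mem_singleton_iff] at ha hb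
    subst ha; subst hb
    exact SimpleGraph.Reachable.refl _⟩

/-- The empty subtree, the minimum of `P_T`. -/
def emptySubtree : SubtreePoset G :=
  ⟨∅, by rintro ⟨a, ha⟩; simp at ha⟩

end Trees


section Aux

variable {V : Type*} [Fintype V] {G : SimpleGraph V}

/-- If all vertices of a walk lie in `s`, endpoints are reachable in the induced graph. -/
lemma reach_induce_of_walk (s : Finset V) {u w : V} (W : G.Walk u w)
    (h : ∀ z ∈ W.support, z ∈ s) (hu : u ∈ s) (hw : w ∈ s) :
    (G.induce (↑s : Set V)).Reachable ⟨u, hu⟩ ⟨w, hw⟩ := by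
  induction W with
  | nil => exact SimpleGraph.Reachable.refl _
  | @cons a b c hab W ih =>
      have hb : b ∈ s := h b (by simp [SimpleGraph.Walk.support_cons])
      have h' : ∀ z ∈ W.support, z ∈ s := fun z hz => h z (by simp [SimpleGraph.Walk.support_cons, hz])
      exact (SimpleGraph.Adj.reachable
        (by exact hab : (G.induce (↑s : Set V)).Adj ⟨a, hu⟩ ⟨b, hb⟩)).trans (ih h' hb hw)

/-- In an acyclic graph, any path between two vertices of a preconnected induced
subgraph stays inside it. -/
lemma path_support_mem (hacyc : G.IsAcyclic) (s : Finset V)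
    (hs : (G.induce (↑s : Set V)).Preconnected) {u w : V} (hu : u ∈ s) (hw : w ∈ s)
    (P : G.Walk u w) (hP : P.IsPath) : ∀ z ∈ P.support, z ∈ s := by
  obtain ⟨W⟩ := hs ⟨u, hu⟩ ⟨w, hw⟩
  let W' : G.Walk u w := W.map (SimpleGraph.Embedding.induce (↑s : Set V)).toHom
  have hsupp : ∀ z ∈ W'.support, z ∈ s := by
    intro z hz
    rw [show W'.support = W.support.map _ from by exact SimpleGraph.Walk.support_map ..] at hz
    obtain ⟨⟨z', hz'⟩, _, rfl⟩ := List.mem_map.mp hz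
    exact hz'
  have : P = (W'.toPath : G.Walk u w) :=
    congrArg Subtype.val (hacyc.path_unique ⟨P, hP⟩ W'.toPath)
  intro z hz
  rw [this] at hz
  exact hsupp z (SimpleGraph.Walk.support_toPath_subset W' hz)

/-- A set closed under paths between its elements induces a preconnected graph. -/
lemma preconnected_of_path_closed (hconn : G.Connected) (q : Finset V)
    (h : ∀ u ∈ q, ∀ w ∈ q, ∀ (P : G.Walk u w), P.IsPath → ∀ z ∈ P.support, z ∈ q) :
    (G.induce (↑q : Set V)).Preconnected := by
  rintro ⟨u, hu⟩ ⟨w, hw⟩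
  obtain ⟨W⟩ := hconn.preconnected u w
  exact reach_induce_of_walk q (W.toPath : G.Walk u w)
    (h u hu w hw _ (W.toPath).isPath) hu hw

/-- Intersection of two subtrees is a subtree. -/
lemma inter_subtree (hconn : G.Connected) (hacyc : G.IsAcyclic) (a b : SubtreePoset G) :
    (G.induce (↑(a.val ∩ b.val) : Set V)).Preconnected := by
  apply preconnected_of_path_closed hconn
  intro u hu w hw P hP z hz
  rw [Finset.mem_inter] at hu hw ⊢
  exact ⟨path_support_mem hacyc a.val a.property hu.1 hw.1 P hP z hz,
    path_support_mem hacyc b.val b.property hu.2 hw.2 P hP z hz⟩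

/-- The hull of a finite set of vertices: intersection of all subtrees containing it. -/
noncomputable def hullSet (G : SimpleGraph V) (S : Finset V) : Finset V :=
  (Finset.univ.filter (fun p : SubtreePoset G => S ⊆ p.val)).inf Subtype.val

lemma mem_finset_inf {ι : Type*} {s : Finset ι} {f : ι → Finset V} {z : V}
    (h : ∀ i ∈ s, z ∈ f i) : z ∈ s.inf f := by
  have : ({z} : Finset V) ≤ s.inf f :=
    Finset.le_inf fun i hi => Finset.le_iff_subset.mpr (Finset.singleton_subset_iff.mpr (h i hi))
  exact Finset.singleton_subset_iff.mp this

lemma subset_hullSet (G : SimpleGraph V) (S : Finset V) : S ⊆ hullSet G S := by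
  intro z hz
  exact mem_finset_inf fun p hp => (Finset.mem_filter.mp hp).2 hz

lemma hullSet_subset (G : SimpleGraph V) (S : Finset V) {p : SubtreePoset G}
    (hp : S ⊆ p.val) : hullSet G S ⊆ p.val :=
  Finset.le_iff_subset.mp (Finset.inf_le (Finset.mem_filter.mpr ⟨Finset.mem_univ _, hp⟩))

lemma hullSet_preconnected (hconn : G.Connected) (hacyc : G.IsAcyclic) (S : Finset V) :
    (G.induce (↑(hullSet G S) : Set V)).Preconnected := by
  apply preconnected_of_path_closed hconn
  intro u hu w hw P hP z hz
  apply mem_finset_inf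
  intro p hp
  have hSp := (Finset.mem_filter.mp hp).2
  exact path_support_mem hacyc p.val p.property
    (hullSet_subset G S hSp hu) (hullSet_subset G S hSp hw) P hP z hz


lemma vertexSubtree_le_iff {v : V} {p : SubtreePoset G} :
    vertexSubtree G v ≤ p ↔ v ∈ p.val := by
  constructor
  · intro h
    exact Finset.singleton_subset_iff.mp (Finset.le_iff_subset.mp h)
  · intro h
    exact Finset.le_iff_subset.mpr (Finset.singleton_subset_iff.mpr h)

set_option maxHeartbeats 2000000 in
lemma claimA {W : Type} (lab : SubtreePoset G → Monomial W) (hC2 : CondC2 lab)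
    (S : Finset V) :
    (S.sup fun v => coordGen lab (vertexSubtree G v)) =
      ∑ p ∈ Finset.univ.filter (fun p : SubtreePoset G => ¬ S ⊆ p.val), lab p := by
  apply Finsupp.ext
  intro x
  have happ : ∀ (t : Finset (SubtreePoset G)), (∑ p ∈ t, lab p) x = ∑ p ∈ t, lab p x := by
    intro t
    exact Finsupp.finset_sum_apply t lab x
  have hsup : (S.sup fun v => coordGen lab (vertexSubtree G v)) x
      = S.sup fun v => (coordGen lab (vertexSubtree G v)) x := by
    exact (Finset.comp_sup_eq_sup_comp (fun m : Monomial W => m x)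
      (fun a b => Finsupp.sup_apply a b x) rfl)
  rw [hsup, happ]
  have hgen : ∀ v : V, (coordGen lab (vertexSubtree G v)) x
      = ∑ p ∈ Finset.univ.filter (fun p : SubtreePoset G => v ∉ p.val), lab p x := by
    intro v
    unfold coordGen
    rw [happ]
    congr 1
    ext p
    simp [vertexSubtree_le_iff]
  simp only [hgen]
  -- restrict to the chain A of labels supported at x
  set A : Finset (SubtreePoset G) :=
    Finset.univ.filter (fun p : SubtreePoset G => lab p x ≠ 0) with hA
  have hch : ∀ p ∈ A, ∀ q ∈ A, p ≤ q ∨ q ≤ p := by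
    intro p hp q hq
    apply hC2
    intro h0
    have := congrArg (fun m : Monomial W => m x) h0
    simp only [Finsupp.inf_apply, Finsupp.coe_zero, Pi.zero_apply] at this
    rcases Nat.le_zero.mp this.le with h
    have hp' := (Finset.mem_filter.mp hp).2
    have hq' := (Finset.mem_filter.mp hq).2
    rcases Nat.min_eq_zero_iff.mp h with h | h
    · exact hp' h
    · exact hq' h
  have hred : ∀ (Q : SubtreePoset G → Prop) (instQ : DecidablePred Q),
      ∑ p ∈ @Finset.filter _ Q instQ Finset.univ, lab p x
        = ∑ p ∈ @Finset.filter _ Q instQ A, lab p x := by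
    intro Q instQ
    apply (Finset.sum_subset ?_ ?_).symm
    · intro p hp
      rw [Finset.mem_filter] at hp ⊢
      rw [hA, Finset.mem_filter] at hp
      exact ⟨Finset.mem_univ _, hp.2⟩
    · intro p hp hp'
      by_contra h0
      apply hp'
      rw [Finset.mem_filter]
      rw [Finset.mem_filter] at hp
      rw [hA]
      exact ⟨Finset.mem_filter.mpr ⟨Finset.mem_univ _, h0⟩, hp.2⟩
  have hred1 : ∑ p ∈ Finset.univ.filter (fun p : SubtreePoset G => ¬ S ⊆ p.val), lab p x
      = ∑ p ∈ A.filter (fun p : SubtreePoset G => ¬ S ⊆ p.val), lab p x := hred _ _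
  have hred2 : ∀ v : V, ∑ p ∈ Finset.univ.filter (fun p : SubtreePoset G => v ∉ p.val), lab p x
      = ∑ p ∈ A.filter (fun p : SubtreePoset G => v ∉ p.val), lab p x := fun v => hred _ _
  rw [hred1]
  simp only [hred2]
  apply le_antisymm
  · apply Finset.sup_le
    intro v hv
    apply Finset.sum_le_sum_of_subset
    intro p hp
    rw [Finset.mem_filter] at hp ⊢
    exact ⟨hp.1, fun hS => hp.2 (hS hv)⟩
  · by_cases hB : (A.filter (fun p : SubtreePoset G => ¬ S ⊆ p.val)).Nonempty
    · obtain ⟨pm, hpmmem, hpmmax⟩ : ∃ i ∈ A.filter (fun p : SubtreePoset G => ¬ S ⊆ p.val),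
        ∀ y ∈ A.filter (fun p : SubtreePoset G => ¬ S ⊆ p.val), ¬ i < y := by
        obtain ⟨i, hi⟩ := Finset.exists_maximal hB
        exact ⟨i, hi.1, fun y hy hlt => lt_irrefl _ (lt_of_lt_of_le hlt (hi.2 hy hlt.le))⟩
      have hpmA : pm ∈ A := Finset.mem_of_mem_filter _ hpmmem
      obtain ⟨v, hvS, hvpm⟩ := Finset.not_subset.mp (Finset.mem_filter.mp hpmmem).2
      have hsub : A.filter (fun p : SubtreePoset G => ¬ S ⊆ p.val)
          ⊆ A.filter (fun p : SubtreePoset G => v ∉ p.val) := by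
        intro p hp
        have hpA : p ∈ A := Finset.mem_of_mem_filter _ hp
        have hle : p ≤ pm := by
          rcases hch p hpA pm hpmA with h | h
          · exact h
          · rcases eq_or_lt_of_le h with h' | h'
            · exact le_of_eq h'.symm
            · exact absurd h' (hpmmax p hp)
        rw [Finset.mem_filter]
        refine ⟨hpA, fun hvp => hvpm ?_⟩
        exact Finset.le_iff_subset.mp hle hvp
      exact le_trans (Finset.sum_le_sum_of_subset hsub)
        (Finset.le_sup (f := fun v => ∑ p ∈ A.filter (fun p : SubtreePoset G => v ∉ p.val), lab p x) hvS)
    · rw [Finset.not_nonempty_iff_eq_empty.mp hB, Finset.sum_empty]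
      exact Nat.zero_le _


set_option maxHeartbeats 2000000 in
lemma reflectF (hconn : G.Connected) (hacyc : G.IsAcyclic) {W : Type}
    (lab : SubtreePoset G → Monomial W)
    (hC1 : ∀ p : SubtreePoset G,
        (p.val ≠ Finset.univ ∧
          ∀ a b : SubtreePoset G, p < a → p < b → ¬ IsGLB {a, b} p) →
        lab p ≠ 0)
    (hC2 : CondC2 lab) {q q' : SubtreePoset G}
    (hle : ∑ p ∈ Finset.univ.filter (fun p : SubtreePoset G => ¬ q.val ⊆ p.val), lab p
      ≤ ∑ p ∈ Finset.univ.filter (fun p : SubtreePoset G => ¬ q'.val ⊆ p.val), lab p) :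
    q ≤ q' := by
  by_contra hq
  have hq2 : ¬ q.val ⊆ q'.val := fun h => hq (Finset.le_iff_subset.mpr h)
  obtain ⟨v, hvq, hvq'⟩ := Finset.not_subset.mp hq2
  -- a maximal subtree containing q' but not v
  set M : Finset (SubtreePoset G) :=
    Finset.univ.filter (fun p : SubtreePoset G => q'.val ⊆ p.val ∧ v ∉ p.val) with hM
  have hMne : M.Nonempty := ⟨q', Finset.mem_filter.mpr ⟨Finset.mem_univ _, le_refl _, hvq'⟩⟩
  obtain ⟨pm, hpmM, hpmmax⟩ : ∃ i ∈ M, ∀ y ∈ M, ¬ i < y := by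
    obtain ⟨i, hi⟩ := Finset.exists_maximal hMne
    exact ⟨i, hi.1, fun y hy hlt => lt_irrefl _ (lt_of_lt_of_le hlt (hi.2 hy hlt.le))⟩
  have hpmq' : q'.val ⊆ pm.val := (Finset.mem_filter.mp hpmM).2.1
  have hpmv : v ∉ pm.val := (Finset.mem_filter.mp hpmM).2.2
  -- pm is meet-irreducible
  have hlabpm : lab pm ≠ 0 := by
    apply hC1
    constructor
    · intro h
      exact hpmv (h ▸ Finset.mem_univ v)
    · intro a b ha hb hglb
      have hva : v ∈ a.val := by
        by_contra hva
        exact hpmmax a (Finset.mem_filter.mpr ⟨Finset.mem_univ _,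
          le_trans hpmq' (Finset.le_iff_subset.mp ha.le), hva⟩) ha
      have hvb : v ∈ b.val := by
        by_contra hvb
        exact hpmmax b (Finset.mem_filter.mpr ⟨Finset.mem_univ _,
          le_trans hpmq' (Finset.le_iff_subset.mp hb.le), hvb⟩) hb
      set c : SubtreePoset G := ⟨a.val ∩ b.val, inter_subtree hconn hacyc a b⟩ with hc
      have hca : c ≤ a := Finset.le_iff_subset.mpr Finset.inter_subset_left
      have hcb : c ≤ b := Finset.le_iff_subset.mpr Finset.inter_subset_right
      have hcpm : c ≤ pm := hglb.2 (by
        rintro z hz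
        rcases hz with rfl | hz
        · exact hca
        · rw [Set.mem_singleton_iff] at hz
          exact hz ▸ hcb)
      exact hpmv (Finset.le_iff_subset.mp hcpm (Finset.mem_inter.mpr ⟨hva, hvb⟩))
  obtain ⟨x, hx⟩ := Finsupp.support_nonempty_iff.mpr hlabpm
  have hx : lab pm x ≠ 0 := Finsupp.mem_support_iff.mp hx
  -- pass to the chain of labels supported at x
  have happ : ∀ (t : Finset (SubtreePoset G)), (∑ p ∈ t, lab p) x = ∑ p ∈ t, lab p x :=
    fun t => Finsupp.finset_sum_apply t lab x
  set A : Finset (SubtreePoset G) :=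
    Finset.univ.filter (fun p : SubtreePoset G => lab p x ≠ 0) with hA
  have hch : ∀ p ∈ A, ∀ r ∈ A, p ≤ r ∨ r ≤ p := by
    intro p hp r hr
    apply hC2
    intro h0
    have := congrArg (fun m : Monomial W => m x) h0
    simp only [Finsupp.inf_apply, Finsupp.coe_zero, Pi.zero_apply] at this
    rcases Nat.min_eq_zero_iff.mp this with h | h
    · exact (Finset.mem_filter.mp hp).2 h
    · exact (Finset.mem_filter.mp hr).2 h
  have hred : ∀ (Q : SubtreePoset G → Prop) (instQ : DecidablePred Q),
      ∑ p ∈ @Finset.filter _ Q instQ Finset.univ, lab p x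
        = ∑ p ∈ @Finset.filter _ Q instQ A, lab p x := by
    intro Q instQ
    apply (Finset.sum_subset ?_ ?_).symm
    · intro p hp
      rw [Finset.mem_filter] at hp ⊢
      rw [hA, Finset.mem_filter] at hp
      exact ⟨Finset.mem_univ _, hp.2⟩
    · intro p hp hp'
      by_contra h0
      apply hp'
      rw [Finset.mem_filter]
      rw [Finset.mem_filter] at hp
      rw [hA]
      exact ⟨Finset.mem_filter.mpr ⟨Finset.mem_univ _, h0⟩, hp.2⟩
  have hlex := Finsupp.le_def.mp hle x
  rw [happ, happ, hred _ _, hred _ _] at hlex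
  -- pm is in the chain
  have hpmA : pm ∈ A := Finset.mem_filter.mpr ⟨Finset.mem_univ _, hx⟩
  have hlt : ∑ p ∈ A.filter (fun p : SubtreePoset G => ¬ q'.val ⊆ p.val), lab p x
      < ∑ p ∈ A.filter (fun p : SubtreePoset G => ¬ q.val ⊆ p.val), lab p x := by
    apply Finset.sum_lt_sum_of_subset (i := pm)
    · intro p hp
      rw [Finset.mem_filter] at hp ⊢
      refine ⟨hp.1, ?_⟩
      have hppm : p ≤ pm := by
        rcases hch p hp.1 pm hpmA with h | h
        · exact h
        · exact absurd (le_trans hpmq' (Finset.le_iff_subset.mp h)) hp.2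
      intro hqp
      exact hpmv (Finset.le_iff_subset.mp hppm (hqp hvq))
    · exact Finset.mem_filter.mpr ⟨hpmA, fun h => hpmv (h hvq)⟩
    · rw [Finset.mem_filter]
      push_neg
      intro _
      exact hpmq'
    · exact Nat.pos_of_ne_zero hx
    · intro j _ _
      exact Nat.zero_le _
  exact absurd hlex (not_le.mpr hlt)

end Aux

/-- for every `p ∈ P_T`, the atoms below `p` are exactly the
vertices of the subtree corresponding to `p`, and the induced subgraph
`T_{≤ p}` is acyclic and connected (it is a subtree); consequently, for any
coordinatization of `P_T` (any labeling satisfying conditions (C1) and (C2)),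
the lcm lattice of the resulting monomial ideal is `P_T`. -/
theorem stmt11 {V : Type*} [Fintype V] (G : SimpleGraph V)
    (hconn : G.Connected) (hacyc : G.IsAcyclic) :
    (∀ p : SubtreePoset G,
      (G.induce (↑p.val : Set V)).IsAcyclic ∧
      (G.induce (↑p.val : Set V)).Preconnected) ∧
    (∀ (p : SubtreePoset G) (v : V), v ∈ p.val ↔ vertexSubtree G v ≤ p) ∧
    (∀ {W : Type} (lab : SubtreePoset G → Monomial W),
      (∀ p : SubtreePoset G,
          (p.val ≠ Finset.univ ∧
            ∀ a b : SubtreePoset G, p < a → p < b → ¬ IsGLB {a, b} p) →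
          lab p ≠ 0) →
      CondC2 lab →
      Nonempty (SubtreePoset G ≃o
        LcmLat (fun a : {a : SubtreePoset G // ∃ v, a = vertexSubtree G v} =>
          coordGen lab a.val))) := by
  classical
  refine ⟨?_, ?_, ?_⟩
  · intro p
    refine ⟨?_, p.property⟩
    intro v c hc
    have hinj : Function.Injective
        ((SimpleGraph.Embedding.induce (G := G) (↑p.val : Set V)).toHom : _ → V) :=
      Subtype.val_injective
    exact hacyc _ ((SimpleGraph.Walk.map_isCycle_iff_of_injective hinj).mpr hc)
  · intro p v
    exact vertexSubtree_le_iff.symm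
  · intro W lab hC1 hC2
    set g : {a : SubtreePoset G // ∃ v, a = vertexSubtree G v} → Monomial W :=
      fun a => coordGen lab a.val with hg
    set F : SubtreePoset G → Monomial W := fun q =>
      ∑ p ∈ Finset.univ.filter (fun p : SubtreePoset G => ¬ q.val ⊆ p.val), lab p with hF
    -- F q is realized as a finite lcm of generators
    have hFsup : ∀ S : Finset V,
        (S.sup fun v => coordGen lab (vertexSubtree G v))
          = ∑ p ∈ Finset.univ.filter (fun p : SubtreePoset G => ¬ S ⊆ p.val), lab p :=
      claimA lab hC2
    have hmem : ∀ q : SubtreePoset G,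
        ∃ s : Finset {a : SubtreePoset G // ∃ v, a = vertexSubtree G v}, F q = s.sup g := by
      intro q
      refine ⟨q.val.attach.image (fun v =>
        (⟨vertexSubtree G v.val, ⟨v.val, rfl⟩⟩ :
          {a : SubtreePoset G // ∃ v, a = vertexSubtree G v})), ?_⟩
      rw [Finset.sup_image]
      have : ((fun a : {a : SubtreePoset G // ∃ v, a = vertexSubtree G v} => coordGen lab a.val)
          ∘ (fun v : {x // x ∈ q.val} =>
            (⟨vertexSubtree G v.val, ⟨v.val, rfl⟩⟩ :
              {a : SubtreePoset G // ∃ v, a = vertexSubtree G v})))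
          = fun v : {x // x ∈ q.val} => coordGen lab (vertexSubtree G v.val) := rfl
      have h2 : ((q.val.attach.sup fun v => coordGen lab (vertexSubtree G ↑v)) : Monomial W)
          = q.val.sup fun v => coordGen lab (vertexSubtree G v) :=
        Finset.sup_attach q.val (fun v => coordGen lab (vertexSubtree G v))
      rw [hg, this, h2, hFsup q.val, hF]
    set Phi : SubtreePoset G → LcmLat g := fun q => ⟨F q, hmem q⟩ with hPhi
    have hmono : ∀ q q' : SubtreePoset G, q ≤ q' → Phi q ≤ Phi q' := by
      intro q q' h
      show F q ≤ F q'
      apply Finset.sum_le_sum_of_subset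
      intro p hp
      rw [Finset.mem_filter] at hp ⊢
      exact ⟨hp.1, fun hsub => hp.2 (le_trans (Finset.le_iff_subset.mp h) hsub)⟩
    have hrefl : ∀ q q' : SubtreePoset G, Phi q ≤ Phi q' → q ≤ q' := by
      intro q q' h
      exact reflectF hconn hacyc lab hC1 hC2 h
    have hinj : Function.Injective Phi := by
      intro q q' h
      exact le_antisymm (hrefl _ _ (le_of_eq h)) (hrefl _ _ (le_of_eq h.symm))
    have hsurj : Function.Surjective Phi := by
      rintro ⟨l, s, hl⟩
      set S : Finset V := s.sup (fun a => a.val.val) with hS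
      have hstep : s.sup g = S.sup (fun v => coordGen lab (vertexSubtree G v)) := by
        apply le_antisymm
        · apply Finset.sup_le
          intro a ha
          obtain ⟨v, hv⟩ := a.property
          have hvS : v ∈ S := by
            rw [hS]
            apply Finset.mem_sup.mpr
            exact ⟨a, ha, by rw [hv]; exact Finset.mem_singleton_self v⟩
          have : g a = coordGen lab (vertexSubtree G v) := congrArg (coordGen lab) hv
          rw [this]
          exact Finset.le_sup (f := fun v => coordGen lab (vertexSubtree G v)) hvS
        · apply Finset.sup_le
          intro v hv
          obtain ⟨a, ha, hva⟩ := Finset.mem_sup.mp hv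
          obtain ⟨w, hw⟩ := a.property
          have hvw : v = w := by
            rw [hw] at hva
            exact Finset.mem_singleton.mp hva
          have : coordGen lab (vertexSubtree G v) = g a :=
            (congrArg (coordGen lab) (hvw ▸ hw)).symm
          rw [this]
          exact Finset.le_sup (f := g) ha
      set q : SubtreePoset G := ⟨hullSet G S, hullSet_preconnected hconn hacyc S⟩ with hq
      refine ⟨q, ?_⟩
      apply Subtype.ext
      show F q = l
      have hfil : Finset.univ.filter (fun p : SubtreePoset G => ¬ q.val ⊆ p.val)
          = Finset.univ.filter (fun p : SubtreePoset G => ¬ S ⊆ p.val) := by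
        ext p
        rw [Finset.mem_filter, Finset.mem_filter]
        constructor
        · rintro ⟨h1, h2⟩
          exact ⟨h1, fun h => h2 (hullSet_subset G S h)⟩
        · rintro ⟨h1, h2⟩
          exact ⟨h1, fun h => h2 ((subset_hullSet G S).trans h)⟩
      rw [hF]
      show (∑ p ∈ Finset.univ.filter (fun p : SubtreePoset G => ¬ q.val ⊆ p.val), lab p) = l
      rw [hfil, ← hFsup S, ← hstep, hl]
    exact ⟨{ toEquiv := Equiv.ofBijective Phi ⟨hinj, hsurj⟩,
             map_rel_iff' := fun {q q'} => ⟨hrefl q q', hmono q q'⟩ }⟩
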